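/- Let p ≥ 1, let G be a graph in W_p, and let v be a non-isolated vertex of G. Then G − v belongs to W_p if and only if |N_G(v) − N_G(S)| ≥ p for every independent set S of the localization G_v. -/

import Mathlib

open Classical

noncomputable section

variable {V : Type*}

/-- `s` is an independent set of `G`. -/
def IndepSet (G : SimpleGraph V) (s : Set V) : Prop :=
  ∀ ⦃a⦄, a ∈ s → ∀ ⦃b⦄, b ∈ s → ¬ G.Adj a b

/-- The independence number `α(G)`. -/
def alphaNum [Fintype V] (G : SimpleGraph V) : ℕ :=
  sSup {n | ∃ s : Set V, IndepSet G s ∧ s.ncard = n}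

/-- `s` is a maximal independent set of `G`. -/
def MaximalIndep (G : SimpleGraph V) (s : Set V) : Prop :=
  IndepSet G s ∧ ∀ t : Set V, IndepSet G t → s ⊆ t → s = t

/-- `G` is well-covered: all maximal independent sets have cardinality `α(G)`. -/
def WellCovered [Fintype V] (G : SimpleGraph V) : Prop :=
  ∀ s : Set V, MaximalIndep G s → s.ncard = alphaNum G

/-- The open neighborhood `N_G(S)` of a set of vertices. -/
def openNbhd (G : SimpleGraph V) (S : Set V) : Set V :=
  {v | v ∉ S ∧ ∃ u ∈ S, G.Adj u v}

/-- The closed neighborhood `N_G[S]`. -/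
def closedNbhd (G : SimpleGraph V) (S : Set V) : Set V :=
  S ∪ openNbhd G S

/-- The vertex set of the localization `G_S = G - N_G[S]`. -/
def localSet (G : SimpleGraph V) (S : Set V) : Set V :=
  (closedNbhd G S)ᶜ

/-- `G` belongs to the class `W_p`. -/
def Wp (p : ℕ) [Fintype V] (G : SimpleGraph V) : Prop :=
  p ≤ Fintype.card V ∧
    ∀ A : Fin p → Set V,
      (∀ i, IndepSet G (A i)) →
      (∀ i j, i ≠ j → Disjoint (A i) (A j)) →
      ∃ S : Fin p → Set V,
        (∀ i j, i ≠ j → Disjoint (S i) (S j)) ∧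
        (∀ i, IndepSet G (S i) ∧ (S i).ncard = alphaNum G) ∧
        (∀ i, A i ⊆ S i)

/-- `G` is `α`-critical: deleting any edge increases the independence number. -/
def AlphaCritical [Fintype V] (G : SimpleGraph V) : Prop :=
  ∀ a b : V, G.Adj a b → alphaNum G < alphaNum (G.deleteEdges {s(a, b)})

/-- The vertex set of `G_{ab} = G - (N_G(a) ∪ N_G(b))`. -/
def edgeLocalSet (G : SimpleGraph V) (a b : V) : Set V :=
  (G.neighborSet a ∪ G.neighborSet b)ᶜ


section AuxLemmas

lemma indep_mono {G : SimpleGraph V} {s t : Set V} (h : s ⊆ t) (ht : IndepSet G t) :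
    IndepSet G s := fun _ ha _ hb => ht (h ha) (h hb)

lemma bddAbove_alpha [Fintype V] (G : SimpleGraph V) :
    BddAbove {n | ∃ s : Set V, IndepSet G s ∧ s.ncard = n} := by
  refine ⟨Fintype.card V, fun n hn => ?_⟩
  obtain ⟨s, _, rfl⟩ := hn
  calc s.ncard ≤ Set.univ.ncard := Set.ncard_le_ncard (Set.subset_univ s) Set.finite_univ
      _ = Fintype.card V := by rw [Set.ncard_univ, Nat.card_eq_fintype_card]

lemma ncard_le_alpha [Fintype V] {G : SimpleGraph V} {s : Set V} (h : IndepSet G s) :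
    s.ncard ≤ alphaNum G :=
  le_csSup (bddAbove_alpha G) ⟨s, h, rfl⟩

lemma exists_maximal_superset [Fintype V] {G : SimpleGraph V} {A : Set V}
    (h : IndepSet G A) : ∃ M, A ⊆ M ∧ MaximalIndep G M := by
  set F : Set ℕ := {n | ∃ t : Set V, IndepSet G t ∧ A ⊆ t ∧ t.ncard = n} with hF
  have hne : F.Nonempty := ⟨A.ncard, A, h, subset_rfl, rfl⟩
  have hbdd : BddAbove F := by
    refine ⟨Fintype.card V, fun n hn => ?_⟩
    obtain ⟨s, _, _, rfl⟩ := hn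
    calc s.ncard ≤ Set.univ.ncard := Set.ncard_le_ncard (Set.subset_univ s) Set.finite_univ
      _ = Fintype.card V := by rw [Set.ncard_univ, Nat.card_eq_fintype_card]
  obtain ⟨M, hM, hAM, hcard⟩ := Nat.sSup_mem hne hbdd
  refine ⟨M, hAM, hM, fun t ht hMt => ?_⟩
  have : t.ncard ≤ M.ncard := by
    rw [hcard]; exact le_csSup hbdd ⟨t, ht, hAM.trans hMt, rfl⟩
  exact Set.eq_of_subset_of_ncard_le hMt this (Set.toFinite t)

lemma wellCovered_of_wp [Fintype V] {G : SimpleGraph V} {p : ℕ} (hp : 1 ≤ p)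
    (hG : Wp p G) : WellCovered G := by
  intro M hM
  set j : Fin p := ⟨0, hp⟩
  set A : Fin p → Set V := fun i => if i = j then M else ∅ with hA
  obtain ⟨S, _, hSind, hsub⟩ := hG.2 A
    (by intro i; simp only [hA]; split
        · exact hM.1
        · exact fun a ha => absurd ha (Set.notMem_empty a))
    (by intro i k hik
        simp only [hA]; split <;> split <;>
          simp_all [Set.disjoint_empty, Set.empty_disjoint])
  have h1 : A j ⊆ S j := hsub j
  have h2 : M = S j := hM.2 (S j) (hSind j).1 (by simpa [hA] using h1)
  rw [h2]; exact (hSind j).2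

lemma indep_induce_iff {G : SimpleGraph V} {W : Set V} {s : Set W} :
    IndepSet (G.induce W) s ↔ IndepSet G (Subtype.val '' s) := by
  constructor
  · rintro h a ⟨a', ha', rfl⟩ b ⟨b', hb', rfl⟩ hadj
    exact h ha' hb' hadj
  · intro h a ha b hb hadj
    exact h ⟨a, ha, rfl⟩ ⟨b, hb, rfl⟩ hadj

lemma alpha_induce [Fintype V] {G : SimpleGraph V} {v : V}
    (hwc : WellCovered G) (hv : ∃ u, G.Adj v u) :
    alphaNum (G.induce ({v}ᶜ : Set V)) = alphaNum G := by
  apply le_antisymm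
  · apply csSup_le
    · exact ⟨0, ∅, fun a ha => absurd ha (Set.notMem_empty a), by simp⟩
    rintro n ⟨s, hs, rfl⟩
    rw [← Set.ncard_image_of_injective s Subtype.val_injective]
    exact ncard_le_alpha (indep_induce_iff.mp hs)
  · obtain ⟨u, hu⟩ := hv
    have hind : IndepSet G {u} := by
      rintro a rfl b rfl hadj; exact G.irrefl hadj
    obtain ⟨M, huM, hM⟩ := exists_maximal_superset hind
    have hvM : v ∉ M := fun hvm => hM.1 hvm (huM rfl) hu
    have hMsub : M ⊆ ({v}ᶜ : Set V) := fun x hx => by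
      simp only [Set.mem_compl_iff, Set.mem_singleton_iff]
      rintro rfl; exact hvM hx
    set s : Set ↥({v}ᶜ : Set V) := Subtype.val ⁻¹' M with hs
    have himg : Subtype.val '' s = M := by
      rw [hs, Subtype.image_preimage_coe]
      exact Set.inter_eq_right.mpr hMsub
    have hsind : IndepSet (G.induce ({v}ᶜ : Set V)) s := by
      rw [indep_induce_iff, himg]; exact hM.1
    have hcard : s.ncard = alphaNum G := by
      rw [← Set.ncard_image_of_injective s Subtype.val_injective, himg]
      exact hwc M hM
    exact le_csSup (bddAbove_alpha _) ⟨s, hsind, hcard⟩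

lemma localSet_singleton_spec {G : SimpleGraph V} {v x : V}
    (hx : x ∈ localSet G {v}) : x ≠ v ∧ ¬ G.Adj v x := by
  simp only [localSet, closedNbhd, Set.mem_compl_iff, Set.mem_union, not_or] at hx
  obtain ⟨h1, h2⟩ := hx
  refine ⟨by simpa using h1, fun hadj => h2 ?_⟩
  exact ⟨h1, v, rfl, hadj⟩

lemma dir_mp [Fintype V] {G : SimpleGraph V} {p : ℕ} (hp : 1 ≤ p) (hG : Wp p G)
    {v : V} (hv : ∃ u, G.Adj v u) (hH : Wp p (G.induce ({v}ᶜ : Set V))) :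
    ∀ S : Set V, S ⊆ localSet G {v} → IndepSet G S →
      p ≤ (G.neighborSet v \ openNbhd G S).ncard := by
  intro S hSloc hSind
  by_contra hlt
  push_neg at hlt
  set D : Set V := G.neighborSet v \ openNbhd G S with hD
  have hwc : WellCovered G := wellCovered_of_wp hp hG
  have halpha : alphaNum (G.induce ({v}ᶜ : Set V)) = alphaNum G := alpha_induce hwc hv
  have hDv : D ⊆ ({v}ᶜ : Set V) := by
    intro d hd
    simp only [Set.mem_compl_iff, Set.mem_singleton_iff]
    exact fun h => G.irrefl (h ▸ hd.1)
  have hSv : ∀ x ∈ S, x ≠ v ∧ ¬ G.Adj v x := fun x hx =>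
    localSet_singleton_spec (hSloc hx)
  -- embedding of D into Fin (p-1)
  have hDcard : Fintype.card ↥D ≤ Fintype.card (Fin (p - 1)) := by
    rw [Fintype.card_fin, ← Nat.card_eq_fintype_card, Nat.card_coe_set_eq]
    omega
  obtain ⟨e⟩ := Function.Embedding.nonempty_of_card_le hDcard
  set z : Fin p := ⟨0, hp⟩ with hz
  set ι : Fin (p - 1) → Fin p := fun k => ⟨k.1 + 1, by omega⟩ with hι
  have hιz : ∀ k, ι k ≠ z := by
    intro k h
    have := congrArg Fin.val h
    simp [hι, hz] at this
  have hιinj : Function.Injective ι := by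
    intro a b h
    have := congrArg Fin.val h
    simpa [hι, Fin.ext_iff] using this
  set A : Fin p → Set ↥({v}ᶜ : Set V) := fun i =>
    if i = z then Subtype.val ⁻¹' S
    else {x | ∃ h : (x : V) ∈ D, ι (e ⟨(x : V), h⟩) = i} with hA
  have hmemD : ∀ (x : ↥({v}ᶜ : Set V)) (h : (x : V) ∈ D),
      x ∈ A (ι (e ⟨(x : V), h⟩)) := by
    intro x h
    simp only [hA, if_neg (hιz _)]
    exact ⟨h, rfl⟩
  obtain ⟨T, hTdisj, hTind, hTsub⟩ := hH.2 A
    (by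
      intro i
      by_cases hiz : i = z
      · subst hiz
        simp only [hA, if_pos rfl]
        rw [indep_induce_iff]
        exact indep_mono (by intro x ⟨x', hx', hxx⟩; exact hxx ▸ hx') hSind
      · simp only [hA, if_neg hiz]
        intro a ha b hb hadj
        obtain ⟨hax, hae⟩ := ha
        obtain ⟨hbx, hbe⟩ := hb
        have : (⟨(a : V), hax⟩ : ↥D) = ⟨(b : V), hbx⟩ :=
          e.injective (hιinj (hae.trans hbe.symm))
        have hval : (a : V) = (b : V) := congrArg (fun (x : ↥D) => (x : V)) this
        have hab : a = b := Subtype.ext hval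
        subst hab
        exact (G.induce _).irrefl hadj)
    (by
      intro i j hij
      rw [Set.disjoint_left]
      intro x hxi hxj
      by_cases hiz : i = z
      · subst hiz
        have hjz : j ≠ z := fun h => hij h.symm
        simp only [hA, if_pos rfl] at hxi
        simp only [hA, if_neg hjz] at hxj
        obtain ⟨h2, -⟩ := hxj
        exact (hSv _ hxi).2 h2.1
      · by_cases hjz : j = z
        · subst hjz
          simp only [hA, if_pos rfl] at hxj
          simp only [hA, if_neg hiz] at hxi
          obtain ⟨h2, -⟩ := hxi
          exact (hSv _ hxj).2 h2.1
        · simp only [hA, if_neg hiz] at hxi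
          simp only [hA, if_neg hjz] at hxj
          obtain ⟨h1, he1⟩ := hxi
          obtain ⟨h2, he2⟩ := hxj
          exact hij (he1.symm.trans he2))
  set X : Set V := Subtype.val '' T z with hX
  have hXind : IndepSet G X := indep_induce_iff.mp (hTind z).1
  have hXcard : X.ncard = alphaNum G := by
    rw [hX, Set.ncard_image_of_injective _ Subtype.val_injective, (hTind z).2, halpha]
  have hSX : S ⊆ X := by
    intro x hx
    have hxv : x ∈ ({v}ᶜ : Set V) := by
      simp only [Set.mem_compl_iff, Set.mem_singleton_iff]
      exact (hSv x hx).1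
    have hmem : (⟨x, hxv⟩ : ↥({v}ᶜ : Set V)) ∈ A z := by
      simp only [hA, if_pos rfl]; exact hx
    exact ⟨⟨x, hxv⟩, hTsub z hmem, rfl⟩
  have hvX : v ∉ X := by
    rintro ⟨x, hxT, hxv⟩
    exact x.2 (by simp [hxv])
  have hclaim : ∀ w, G.Adj v w → w ∉ X := by
    intro w hadj hwX
    have hwS : w ∉ S := fun h => (hSv w h).2 hadj
    have hwnb : w ∉ openNbhd G S := by
      rintro ⟨-, u, huS, hadj'⟩
      exact hXind (hSX huS) hwX hadj'
    have hwD : w ∈ D := ⟨by simpa using hadj, hwnb⟩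
    have hwv : w ∈ ({v}ᶜ : Set V) := hDv hwD
    have hxA : (⟨w, hwv⟩ : ↥({v}ᶜ : Set V)) ∈ A (ι (e ⟨w, hwD⟩)) := hmemD ⟨w, hwv⟩ hwD
    have hxT0 : (⟨w, hwv⟩ : ↥({v}ᶜ : Set V)) ∈ T z := by
      obtain ⟨x', hx', hval⟩ := hwX
      have : x' = ⟨w, hwv⟩ := Subtype.ext hval
      exact this ▸ hx'
    exact Set.disjoint_left.mp (hTdisj z (ι (e ⟨w, hwD⟩)) (fun h => hιz _ h.symm))
      hxT0 (hTsub _ hxA)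
  have hins : IndepSet G (insert v X) := by
    intro a ha b hb hadj
    rcases ha with rfl | ha
    · rcases hb with rfl | hb
      · exact G.irrefl hadj
      · exact hclaim b hadj hb
    · rcases hb with rfl | hb
      · exact hclaim a (G.adj_symm hadj) ha
      · exact hXind ha hb hadj
  have hcard2 : (insert v X).ncard = alphaNum G + 1 := by
    rw [Set.ncard_insert_of_notMem hvX (Set.toFinite X), hXcard]
  have := ncard_le_alpha hins
  omega

lemma transfer [Fintype V] {G : SimpleGraph V} {v : V}
    (halpha : alphaNum (G.induce ({v}ᶜ : Set V)) = alphaNum G) {p : ℕ}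
    (A : Fin p → Set ↥({v}ᶜ : Set V)) (F : Fin p → Set V)
    (hsub : ∀ i, F i ⊆ ({v}ᶜ : Set V))
    (hdisj : ∀ i j, i ≠ j → Disjoint (F i) (F j))
    (hind : ∀ i, IndepSet G (F i))
    (hcard : ∀ i, (F i).ncard = alphaNum G)
    (hAF : ∀ i, Subtype.val '' A i ⊆ F i) :
    ∃ T : Fin p → Set ↥({v}ᶜ : Set V),
      (∀ i j, i ≠ j → Disjoint (T i) (T j)) ∧
      (∀ i, IndepSet (G.induce ({v}ᶜ : Set V)) (T i) ∧
        (T i).ncard = alphaNum (G.induce ({v}ᶜ : Set V))) ∧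
      (∀ i, A i ⊆ T i) := by
  refine ⟨fun i => (Subtype.val ⁻¹' (F i) : Set ↥({v}ᶜ : Set V)), ?_, ?_, ?_⟩
  · intro i j hij
    rw [Set.disjoint_left]
    intro x hxi hxj
    exact Set.disjoint_left.mp (hdisj i j hij) hxi hxj
  · intro i
    have himg : Subtype.val '' ((Subtype.val ⁻¹' (F i)) : Set ↥({v}ᶜ : Set V)) = F i := by
      rw [Subtype.image_preimage_coe]
      exact Set.inter_eq_right.mpr (hsub i)
    constructor
    · rw [indep_induce_iff, himg]; exact hind i
    · rw [← Set.ncard_image_of_injective _ Subtype.val_injective, himg, hcard i, halpha]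
  · intro i x hx
    exact hAF i ⟨x, hx, rfl⟩

lemma dir_mpr [Fintype V] {G : SimpleGraph V} {p : ℕ} (hp : 1 ≤ p) (hG : Wp p G)
    {v : V} (hv : ∃ u, G.Adj v u)
    (hR : ∀ S : Set V, S ⊆ localSet G {v} → IndepSet G S →
      p ≤ (G.neighborSet v \ openNbhd G S).ncard) :
    Wp p (G.induce ({v}ᶜ : Set V)) := by
  have hwc : WellCovered G := wellCovered_of_wp hp hG
  have halpha : alphaNum (G.induce ({v}ᶜ : Set V)) = alphaNum G := alpha_induce hwc hv
  have hopen_empty : openNbhd G (∅ : Set V) = ∅ := by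
    ext x; simp [openNbhd]
  have hNv : p ≤ (G.neighborSet v).ncard := by
    have := hR ∅ (Set.empty_subset _) (fun a ha => absurd ha (Set.notMem_empty a))
    simpa [hopen_empty] using this
  constructor
  · have h1 : (G.neighborSet v).ncard ≤ ({v}ᶜ : Set V).ncard := by
      apply Set.ncard_le_ncard _ (Set.toFinite _)
      intro x hx
      simp only [Set.mem_compl_iff, Set.mem_singleton_iff]
      rintro rfl; exact G.irrefl hx
    have h2 : ({v}ᶜ : Set V).ncard = Fintype.card ↥({v}ᶜ : Set V) := by
      rw [← Nat.card_coe_set_eq, Nat.card_eq_fintype_card]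
    omega
  intro A hAind hAdisj
  set A' : Fin p → Set V := fun i => Subtype.val '' A i with hA'
  have hA'v : ∀ i, v ∉ A' i := by
    rintro i ⟨x, -, hxv⟩
    exact x.2 (by simp [hxv])
  obtain ⟨S, hSdisj, hSprops, hSsub⟩ := hG.2 A'
    (fun i => indep_induce_iff.mp (hAind i))
    (by
      intro i j hij
      rw [Set.disjoint_left]
      rintro x ⟨a, ha, rfl⟩ ⟨b, hb, hba⟩
      have : b = a := Subtype.ext hba
      subst this
      exact Set.disjoint_left.mp (hAdisj i j hij) ha hb)
  by_cases hex : ∃ j, v ∈ S j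
  · obtain ⟨j, hvj⟩ := hex
    set Q : Set V := S j \ {v} with hQ
    have hQind : IndepSet G Q := indep_mono Set.diff_subset (hSprops j).1
    have hQloc : Q ⊆ localSet G {v} := by
      rintro x ⟨hxS, hxv⟩
      simp only [localSet, closedNbhd, Set.mem_compl_iff, Set.mem_union, not_or]
      refine ⟨hxv, ?_⟩
      rintro ⟨-, u, rfl, hadj⟩
      exact (hSprops j).1 hvj hxS hadj
    have hD := hR Q hQloc hQind
    set D : Set V := G.neighborSet v \ openNbhd G Q with hDdef
    have hDadj : ∀ d ∈ D, G.Adj v d := fun d hd => hd.1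
    have hDSj : ∀ d ∈ D, d ∉ S j := fun d hd hdS =>
      (hSprops j).1 hvj hdS (hDadj d hd)
    have hDQ : ∀ d ∈ D, ∀ u ∈ Q, ¬ G.Adj u d := by
      intro d hd u hu hadj
      exact hd.2 ⟨fun h => hDSj d hd h.1, u, hu, hadj⟩
    have hQcard : Q.ncard = alphaNum G - 1 := by
      rw [hQ, Set.ncard_diff_singleton_of_mem hvj, (hSprops j).2]
    have halpha_pos : 1 ≤ alphaNum G := by
      have h0 : 0 < (S j).ncard := by
        rw [Set.ncard_pos]; exact ⟨v, hvj⟩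
      rw [(hSprops j).2] at h0; omega
    -- D is a clique
    have hclique : ∀ d ∈ D, ∀ d' ∈ D, d ≠ d' → G.Adj d d' := by
      intro d hd d' hd' hne
      by_contra hnadj
      have hd'Q : d' ∉ Q := fun h => hDSj d' hd' h.1
      have hdins : d ∉ insert d' Q := by
        intro h
        rcases h with h | h
        · exact hne h
        · exact hDSj d hd h.1
      set W : Set V := insert d (insert d' Q) with hW
      have hWind : IndepSet G W := by
        intro a ha b hb hadj
        rcases ha with rfl | ha
        · rcases hb with rfl | rfl | hb
          · exact G.irrefl hadj
          · exact hnadj hadj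
          · exact hDQ a hd b hb (G.adj_symm hadj)
        · rcases ha with rfl | ha
          · rcases hb with rfl | rfl | hb
            · exact hnadj (G.adj_symm hadj)
            · exact G.irrefl hadj
            · exact hDQ a hd' b hb (G.adj_symm hadj)
          · rcases hb with rfl | rfl | hb
            · exact hDQ b hd a ha hadj
            · exact hDQ b hd' a ha hadj
            · exact hQind ha hb hadj
      have hWcard : W.ncard = alphaNum G + 1 := by
        rw [hW, Set.ncard_insert_of_notMem hdins (Set.toFinite _),
          Set.ncard_insert_of_notMem hd'Q (Set.toFinite _), hQcard]
        omega
      have := ncard_le_alpha hWind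
      omega
    -- pigeonhole : at most p-1 elements of D lie in the other S i
    set U : Set V := D ∩ {x | ∃ i, i ≠ j ∧ x ∈ S i} with hU
    set f : V → Fin p := fun x =>
      if h : ∃ i, i ≠ j ∧ x ∈ S i then h.choose else j with hf
    have hfspec : ∀ x ∈ U, f x ≠ j ∧ x ∈ S (f x) := by
      intro x hx
      have h : ∃ i, i ≠ j ∧ x ∈ S i := hx.2
      simp only [hf]
      rw [dif_pos h]
      exact h.choose_spec
    have hUcard : U.ncard ≤ p - 1 := by
      have hmaps : ∀ x ∈ U, f x ∈ ({j}ᶜ : Set (Fin p)) := by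
        intro x hx
        simpa using (hfspec x hx).1
      have hinj : Set.InjOn f U := by
        intro x hx y hy hxy
        by_contra hne
        have h1 := (hfspec x hx).2
        have h2 := (hfspec y hy).2
        rw [hxy] at h1
        exact (hSprops (f y)).1 h1 h2 (hclique x hx.1 y hy.1 hne)
      have h1 : U.ncard ≤ ({j}ᶜ : Set (Fin p)).ncard :=
        Set.ncard_le_ncard_of_injOn f hmaps hinj (Set.toFinite _)
      have h2 : ({j}ᶜ : Set (Fin p)).ncard = p - 1 := by
        have : ({j}ᶜ : Set (Fin p)) = Set.univ \ {j} := by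
          ext x; simp
        rw [this, Set.ncard_diff_singleton_of_mem (Set.mem_univ j),
          Set.ncard_univ, Nat.card_eq_fintype_card, Fintype.card_fin]
      omega
    have hd_exists : ∃ d ∈ D, d ∉ U := by
      by_contra h
      push_neg at h
      have hDU : D ⊆ U := fun d hd => h d hd
      have := Set.ncard_le_ncard hDU (Set.toFinite _)
      omega
    obtain ⟨d, hdD, hdU⟩ := hd_exists
    have hdSi : ∀ i, i ≠ j → d ∉ S i := by
      intro i hij hdi
      exact hdU ⟨hdD, i, hij, hdi⟩
    have hdv : d ≠ v := fun h => G.irrefl (h ▸ hDadj d hdD)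
    set F : Fin p → Set V := fun i => if i = j then insert d Q else S i with hF
    have hsub : ∀ i, F i ⊆ ({v}ᶜ : Set V) := by
      intro i x hx
      simp only [Set.mem_compl_iff, Set.mem_singleton_iff]
      simp only [hF] at hx
      split at hx
      · rcases hx with rfl | hx
        · exact hdv
        · rintro rfl; exact hx.2 rfl
      · rintro rfl
        exact Set.disjoint_left.mp (hSdisj i j (by assumption)) hx hvj
    have hdisj : ∀ i k, i ≠ k → Disjoint (F i) (F k) := by
      have key : ∀ k, k ≠ j → Disjoint (insert d Q) (S k) := by
        intro k hkj
        rw [Set.disjoint_left]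
        rintro x (rfl | hx)
        · exact hdSi k hkj
        · exact Set.disjoint_left.mp (hSdisj j k (fun h => hkj h.symm)) hx.1
      intro i k hik
      simp only [hF]
      split <;> split
      · rename_i h1 h2; exact absurd (h1.trans h2.symm) hik
      · rename_i h1 h2; subst h1; exact key k h2
      · rename_i h1 h2; subst h2; exact (key i h1).symm
      · exact hSdisj i k hik
    have hind : ∀ i, IndepSet G (F i) := by
      intro i
      simp only [hF]
      split
      · intro a ha b hb hadj
        rcases ha with rfl | ha
        · rcases hb with rfl | hb
          · exact G.irrefl hadj
          · exact hDQ a hdD b hb (G.adj_symm hadj)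
        · rcases hb with rfl | hb
          · exact hDQ b hdD a ha hadj
          · exact hQind ha hb hadj
      · exact (hSprops i).1
    have hcard : ∀ i, (F i).ncard = alphaNum G := by
      intro i
      simp only [hF]
      split
      · have hdQ : d ∉ Q := fun h => hDSj d hdD h.1
        rw [Set.ncard_insert_of_notMem hdQ (Set.toFinite _), hQcard]
        omega
      · exact (hSprops i).2
    have hAF : ∀ i, A' i ⊆ F i := by
      intro i
      simp only [hF]
      split
      · rename_i h; subst h
        intro x hx
        right
        exact ⟨hSsub i hx, fun h => hA'v i (h ▸ hx)⟩
      · exact hSsub i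
    exact transfer halpha A F hsub hdisj hind hcard hAF
  · -- v in no S i : use S directly
    obtain ⟨T, h1, h2, h3⟩ := transfer halpha A S
      (by
        intro i x hx
        simp only [Set.mem_compl_iff, Set.mem_singleton_iff]
        rintro rfl; exact hex ⟨i, hx⟩)
      hSdisj (fun i => (hSprops i).1) (fun i => (hSprops i).2) hSsub
    exact ⟨T, h1, h2, h3⟩


end AuxLemmas

theorem stmt18 [Fintype V] (G : SimpleGraph V) (p : ℕ) (hp : 1 ≤ p)
    (hG : Wp p G) (v : V) (hv : ∃ u, G.Adj v u) :
    Wp p (G.induce ({v}ᶜ : Set V)) ↔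
      ∀ S : Set V, S ⊆ localSet G {v} → IndepSet G S →
        p ≤ (G.neighborSet v \ openNbhd G S).ncard := by
  constructor
  · exact dir_mp hp hG hv
  · exact dir_mpr hp hG hv
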